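/- Let N ≥ 2, let f_n > 0 for all n ∈ {1,…,N}, let η > 0, λ > 0, ρ > 0, set H = Σ_{i=1}^N 1/f_i, and assume f_n·H > N−1 for every n. Define q*_n = (N−1)·η/(λ·ρ·H) · (1 − (N−1)/(f_n·H)), so q*_n > 0 for all n. Then (q*_1,…,q*_N) is a Nash equilibrium of the data owners' game: for every n and every q ≥ 0, η·q*_n/(q*_n + Σ_{i≠n} q*_i) − (λ·ρ/f_n)·q*_n ≥ η·q/(q + Σ_{i≠n} q*_i) − (λ·ρ/f_n)·q. -/

import Mathlib

/-- under `f_n·H > N−1` for all `n`, the closed-form profile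
`q*_n = (N−1)·η/(λ·ρ·H)·(1 − (N−1)/(f_n·H))` is positive and is a Nash
equilibrium of the data owners' game. -/
theorem data_owners_nash (N : ℕ) (hN : 2 ≤ N) (f : Fin N → ℝ) (hf : ∀ n, 0 < f n)
    (η lam ρ : ℝ) (hη : 0 < η) (hlam : 0 < lam) (hρ : 0 < ρ)
    (hpos : ∀ n, ((N : ℝ) - 1) < f n * ∑ i, 1 / f i)
    (q : Fin N → ℝ)
    (hq : ∀ n, q n = ((N : ℝ) - 1) * η / (lam * ρ * ∑ i, 1 / f i) *
      (1 - ((N : ℝ) - 1) / (f n * ∑ i, 1 / f i))) :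
    (∀ n, 0 < q n) ∧
    ∀ n, ∀ x : ℝ, 0 ≤ x →
      η * x / (x + ∑ i ∈ Finset.univ.erase n, q i) - lam * ρ / f n * x ≤
      η * q n / (q n + ∑ i ∈ Finset.univ.erase n, q i) - lam * ρ / f n * q n := by
  set H := ∑ i, 1 / f i with hH
  have hN1 : (1 : ℝ) ≤ (N : ℝ) - 1 := by
    have : (2 : ℝ) ≤ (N : ℝ) := by exact_mod_cast hN
    linarith
  have hHpos : 0 < H := by
    apply Finset.sum_pos (fun i _ => one_div_pos.mpr (hf i))
    exact ⟨⟨0, by omega⟩, Finset.mem_univ _⟩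
  set A := ((N : ℝ) - 1) * η / (lam * ρ * H) with hA
  have hApos : 0 < A := by
    apply div_pos (by nlinarith) (by positivity)
  have hqpos : ∀ n, 0 < q n := by
    intro n
    rw [hq n]
    apply mul_pos hApos
    have hfH : 0 < f n * H := mul_pos (hf n) hHpos
    rw [sub_pos, div_lt_one hfH]
    exact hpos n
  refine ⟨hqpos, ?_⟩
  have hsum : ∑ i, q i = A := by
    have h1 : ∀ i : Fin N, q i = A - A * (((N : ℝ) - 1) / H) * (1 / f i) := by
      intro i
      rw [hq i]
      have hfi := (hf i).ne'
      field_simp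
    calc ∑ i, q i = ∑ i, (A - A * (((N : ℝ) - 1) / H) * (1 / f i)) := by
          exact Finset.sum_congr rfl fun i _ => h1 i
      _ = (N : ℝ) * A - A * (((N : ℝ) - 1) / H) * H := by
          rw [Finset.sum_sub_distrib, ← Finset.mul_sum, ← hH]
          simp [Finset.card_univ, mul_comm]
      _ = A := by field_simp; ring
  intro n x hx
  set S := ∑ i ∈ Finset.univ.erase n, q i with hS
  have hQS : q n + S = A := by
    rw [hS, Finset.add_sum_erase _ q (Finset.mem_univ n), hsum]
  have hSpos : 0 < S := by
    apply Finset.sum_pos (fun i _ => hqpos i)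
    rw [← Finset.card_pos, Finset.card_erase_of_mem (Finset.mem_univ n), Finset.card_univ,
      Fintype.card_fin]
    omega
  set c := lam * ρ / f n with hc
  have hcpos : 0 < c := div_pos (mul_pos hlam hρ) (hf n)
  have hkey : c * A ^ 2 = η * S := by
    have hqn : q n = A * (1 - ((N : ℝ) - 1) / (f n * H)) := hq n
    have hSval : S = A * (((N : ℝ) - 1) / (f n * H)) := by
      have : S = A - q n := by linarith [hQS]
      rw [this, hqn]; ring
    rw [hSval, hc, hA]
    have hfn := (hf n).ne'
    field_simp
  have hxS : 0 < x + S := by linarith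
  have hqS : 0 < q n + S := by linarith [hqpos n]
  rw [← sub_nonneg]
  have heq : (η * q n / (q n + S) - c * q n) - (η * x / (x + S) - c * x)
      = c * (q n - x) ^ 2 / (x + S) := by
    rw [← hQS] at hkey
    field_simp
    linear_combination (-(q n - x)) * hkey
  rw [heq]
  positivity
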